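/- arXiv:2311.14299 — 2 statements merged into one kernel-verified Lean document; each statement's English description precedes it below -/
import Mathlib

section
/- For a positive integer n, the Schwarzian derivative of f(w) = w^{−n} + log(w) equals (w^{2n} − w^n(2n³ + 2n) − n²(n² − 1)) / (2w²(w^n − n)²) dw². Near w = 0 this expands as ((1 − n²)/2) w^{−2} − 2n w^{n−2} + O(w^{2n−2}); consequently it has a pole of order 2 at w = 0 if n ≥ 2, and a pole of order exactly 1 if n = 1. -/
set_option maxHeartbeats 1000000

/-- The Schwarzian derivative `S(f) = (f''/f')' - (1/2)(f''/f')²`. -/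
noncomputable def schwarzian (f : ℂ → ℂ) (z : ℂ) : ℂ :=
  deriv (fun w => deriv (deriv f) w / deriv f w) z
    - (1 / 2) * (deriv (deriv f) z / deriv f z) ^ 2

lemma key_alg (y v B A C : ℂ) (hy : y ≠ 0) (hv : v ≠ 0) (hB : B ≠ 0) :
    (y * v⁻¹ * v⁻¹ * A * (y * B) - (y * v⁻¹ * C) * (y * v⁻¹ * C)) / (y * B) ^ 2
      - 1 / 2 * ((y * v⁻¹ * C) / (y * B)) ^ 2
    = (2 * (A * B) - 3 * C ^ 2) / (2 * v ^ 2 * B ^ 2) := by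
  field_simp
  ring

lemma main_eq (n : ℕ) (w : ℂ) (hw : w ∈ Complex.slitPlane)
    (hne : w ^ n ≠ (n : ℂ)) :
    schwarzian (fun z => z ^ (-(n : ℤ)) + Complex.log z) w
        = (w ^ (2 * n) - w ^ n * (2 * (n : ℂ) ^ 3 + 2 * (n : ℂ))
            - (n : ℂ) ^ 2 * ((n : ℂ) ^ 2 - 1)) / (2 * w ^ 2 * (w ^ n - (n : ℂ)) ^ 2) := by
  set f : ℂ → ℂ := fun z => z ^ (-(n : ℤ)) + Complex.log z with hf
  set g₁ : ℂ → ℂ := fun z => (Int.cast (-(n:ℤ)) : ℂ) * z ^ (-(n:ℤ) - 1) + z⁻¹ with hg₁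
  set g₂ : ℂ → ℂ := fun z => (Int.cast (-(n:ℤ)) : ℂ) * ((Int.cast (-(n:ℤ) - 1) : ℂ) * z ^ (-(n:ℤ) - 1 - 1)) + -(z ^ 2)⁻¹ with hg₂
  have hd1 : ∀ z ∈ Complex.slitPlane, HasDerivAt f (g₁ z) z := fun z hz =>
    ((hasDerivAt_zpow (-(n:ℤ)) z (Or.inl (Complex.slitPlane_ne_zero hz))).add
      (Complex.hasDerivAt_log hz))
  have hd2 : ∀ z : ℂ, z ≠ 0 → HasDerivAt g₁ (g₂ z) z := fun z hz =>
    (((hasDerivAt_zpow (-(n:ℤ) - 1) z (Or.inl hz)).const_mul ((Int.cast (-(n:ℤ)) : ℂ))).add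
      ((hasDerivAt_inv hz)))
  have hder1 : ∀ z ∈ Complex.slitPlane, deriv f z = g₁ z := fun z hz => (hd1 z hz).deriv
  have hder2 : ∀ z ∈ Complex.slitPlane, deriv (deriv f) z = g₂ z := by
    intro z hz
    have h1 : deriv f =ᶠ[nhds z] g₁ :=
      Filter.eventuallyEq_of_mem (Complex.isOpen_slitPlane.mem_nhds hz) hder1
    rw [h1.deriv_eq]
    exact (hd2 z (Complex.slitPlane_ne_zero hz)).deriv
  have hw0 : w ≠ 0 := Complex.slitPlane_ne_zero hw
  have hwn : w ^ n - (n : ℂ) ≠ 0 := sub_ne_zero.2 hne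
  have e1 : w ^ (-(n:ℤ) - 1 - 1) = w ^ (-(n:ℤ) - 1) * w⁻¹ := by
    rw [show -(n:ℤ) - 1 - 1 = (-(n:ℤ) - 1) + (-1) by ring, zpow_add₀ hw0, zpow_neg_one]
  have e2 : w ^ (-(n:ℤ) - 1 - 1 - 1) = w ^ (-(n:ℤ) - 1) * w⁻¹ * w⁻¹ := by
    rw [show -(n:ℤ) - 1 - 1 - 1 = ((-(n:ℤ) - 1) + (-1)) + (-1) by ring, zpow_add₀ hw0,
      zpow_add₀ hw0, zpow_neg_one]
  have e0 : w ^ (-(n:ℤ) - 1) * w ^ n = w⁻¹ := by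
    rw [← zpow_natCast w n, ← zpow_add₀ hw0, show -(n:ℤ) - 1 + n = -1 by ring, zpow_neg_one]
  have hy : w ^ (-(n:ℤ) - 1) ≠ 0 := zpow_ne_zero _ hw0
  have hfact1 : g₁ w = w ^ (-(n:ℤ) - 1) * (w ^ n - (n : ℂ)) := by
    rw [hg₁]; push_cast
    rw [mul_sub, e0]; ring
  have hfact2 : g₂ w = w ^ (-(n:ℤ) - 1) * w⁻¹ * ((n:ℂ) ^ 2 + (n:ℂ) - w ^ n) := by
    rw [hg₂]; push_cast
    simp only [e1]
    have h2 : (w ^ 2)⁻¹ = w ^ (-(n:ℤ) - 1) * w⁻¹ * w ^ n := by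
      rw [show w ^ (-(n:ℤ) - 1) * w⁻¹ * w ^ n = w ^ (-(n:ℤ) - 1) * w ^ n * w⁻¹ from by ring,
        e0, ← mul_inv, ← sq]
    rw [h2]; ring
  have hfact3 : (Int.cast (-(n:ℤ)) : ℂ) * ((Int.cast (-(n:ℤ) - 1) : ℂ) *
        ((Int.cast (-(n:ℤ) - 1 - 1) : ℂ) * w ^ (-(n:ℤ) - 1 - 1 - 1)))
        + -(-(2 * w ^ 1) / (w ^ 2) ^ 2)
      = w ^ (-(n:ℤ) - 1) * w⁻¹ * w⁻¹ * (2 * w ^ n - (n:ℂ) * ((n:ℂ) + 1) * ((n:ℂ) + 2)) := by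
    push_cast
    simp only [e2]
    have h3 : -(-(2 * w ^ 1) / (w ^ 2) ^ 2) = w ^ (-(n:ℤ) - 1) * w⁻¹ * w⁻¹ * (2 * w ^ n) := by
      rw [show w ^ (-(n:ℤ) - 1) * w⁻¹ * w⁻¹ * (2 * w ^ n)
          = 2 * (w ^ (-(n:ℤ) - 1) * w ^ n) * (w⁻¹ * w⁻¹) from by ring, e0]
      field_simp
    rw [h3]; ring
  have hg₁ne : g₁ w ≠ 0 := by
    rw [hfact1]; exact mul_ne_zero hy hwn
  have hq : deriv (fun z => deriv (deriv f) z / deriv f z) w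
      = (((Int.cast (-(n:ℤ)) : ℂ) * ((Int.cast (-(n:ℤ) - 1) : ℂ) *
          ((Int.cast (-(n:ℤ) - 1 - 1) : ℂ) * w ^ (-(n:ℤ) - 1 - 1 - 1)))
        + -(-(2 * w ^ 1) / (w ^ 2) ^ 2)) * g₁ w - g₂ w * g₂ w) / (g₁ w) ^ 2 := by
    have heq : (fun z => deriv (deriv f) z / deriv f z) =ᶠ[nhds w] fun z => g₂ z / g₁ z := by
      filter_upwards [Complex.isOpen_slitPlane.mem_nhds hw] with z hz
      rw [hder1 z hz, hder2 z hz]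
    rw [heq.deriv_eq]
    have h := (((((hasDerivAt_zpow (-(n:ℤ) - 1 - 1) w (Or.inl hw0)).const_mul
        ((Int.cast (-(n:ℤ) - 1) : ℂ))).const_mul ((Int.cast (-(n:ℤ)) : ℂ))).add
      (((hasDerivAt_pow 2 w).inv (pow_ne_zero 2 hw0)).neg)).div (hd2 w hw0) hg₁ne)
    exact h.deriv
  rw [schwarzian, hq, hder1 w hw, hder2 w hw, hfact1, hfact2, hfact3]
  rw [key_alg _ _ _ _ _ hy hw0 hwn]
  congr 1
  rw [mul_comm 2 n, pow_mul]
  ring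

lemma lim_two (n : ℕ) (hn : 2 ≤ n) :
    Filter.Tendsto (fun w : ℂ => w ^ 2 *
          ((w ^ (2 * n) - w ^ n * (2 * (n : ℂ) ^ 3 + 2 * (n : ℂ))
            - (n : ℂ) ^ 2 * ((n : ℂ) ^ 2 - 1)) / (2 * w ^ 2 * (w ^ n - (n : ℂ)) ^ 2)))
        (nhdsWithin 0 {0}ᶜ) (nhds ((1 - (n : ℂ) ^ 2) / 2)) := by
  have hn0 : (n : ℂ) ≠ 0 := Nat.cast_ne_zero.2 (by omega)
  set N : ℂ → ℂ := fun w => w ^ (2 * n) - w ^ n * (2 * (n : ℂ) ^ 3 + 2 * (n : ℂ))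
            - (n : ℂ) ^ 2 * ((n : ℂ) ^ 2 - 1) with hN
  have hcont : ContinuousAt (fun w : ℂ => N w / (2 * (w ^ n - (n : ℂ)) ^ 2)) 0 := by
    apply ContinuousAt.div (by fun_prop) (by fun_prop)
    simp [zero_pow (by omega : n ≠ 0)]
    omega
  have hval : N 0 / (2 * ((0:ℂ) ^ n - (n : ℂ)) ^ 2) = (1 - (n : ℂ) ^ 2) / 2 := by
    rw [hN]
    simp [zero_pow (by omega : n ≠ 0), zero_pow (by omega : 2 * n ≠ 0)]
    field_simp
    ring
  have h1 : Filter.Tendsto (fun w : ℂ => N w / (2 * (w ^ n - (n : ℂ)) ^ 2))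
      (nhdsWithin 0 {0}ᶜ) (nhds ((1 - (n : ℂ) ^ 2) / 2)) := by
    rw [← hval]
    exact hcont.tendsto.mono_left nhdsWithin_le_nhds
  apply h1.congr'
  apply Filter.eventuallyEq_of_mem self_mem_nhdsWithin
  intro w hw
  have hw0 : (w : ℂ) ≠ 0 := hw
  simp only
  rcases eq_or_ne ((w ^ n - (n : ℂ)) ^ 2) 0 with hD | hD
  · simp [hD]
  · field_simp
    ring

lemma lim_one :
    Filter.Tendsto (fun w : ℂ => w *
          ((w ^ (2 * 1) - w ^ 1 * (2 * ((1:ℕ) : ℂ) ^ 3 + 2 * ((1:ℕ) : ℂ))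
            - ((1:ℕ) : ℂ) ^ 2 * (((1:ℕ) : ℂ) ^ 2 - 1)) / (2 * w ^ 2 * (w ^ 1 - ((1:ℕ) : ℂ)) ^ 2)))
        (nhdsWithin 0 {0}ᶜ) (nhds (-2)) := by
  have h1 : Filter.Tendsto (fun w : ℂ => (w - 4) / (2 * (w - 1) ^ 2))
      (nhdsWithin 0 {0}ᶜ) (nhds (-2)) := by
    have hcont : ContinuousAt (fun w : ℂ => (w - 4) / (2 * (w - 1) ^ 2)) 0 := by
      apply ContinuousAt.div (by fun_prop) (by fun_prop)
      norm_num
    have hval : ((0:ℂ) - 4) / (2 * ((0:ℂ) - 1) ^ 2) = -2 := by norm_num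
    rw [← hval]
    exact hcont.tendsto.mono_left nhdsWithin_le_nhds
  apply h1.congr'
  apply Filter.eventuallyEq_of_mem self_mem_nhdsWithin
  intro w hw
  have hw0 : (w : ℂ) ≠ 0 := hw
  simp only [Nat.cast_one, pow_one]
  rcases eq_or_ne ((w - (1:ℂ)) ^ 2) 0 with hD | hD
  · simp [hD]
  · field_simp
    ring

/-- For a positive integer `n`, the Schwarzian derivative of
`f(w) = w^(-n) + log w` equals
`(w^(2n) - w^n(2n³+2n) - n²(n²-1)) / (2w²(w^n - n)²)`.
If `n ≥ 2` then `w² · S(f)(w) → (1-n²)/2 ≠ 0` as `w → 0` (pole of order 2),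
and if `n = 1` then `w · S(f)(w) → -2 ≠ 0` (pole of order exactly 1). -/
theorem stmt2 (n : ℕ) (hn : 1 ≤ n) :
    (∀ w ∈ Complex.slitPlane, w ^ n ≠ (n : ℂ) →
      schwarzian (fun z => z ^ (-(n : ℤ)) + Complex.log z) w
        = (w ^ (2 * n) - w ^ n * (2 * (n : ℂ) ^ 3 + 2 * (n : ℂ))
            - (n : ℂ) ^ 2 * ((n : ℂ) ^ 2 - 1)) / (2 * w ^ 2 * (w ^ n - (n : ℂ)) ^ 2)) ∧
    (2 ≤ n →
      Filter.Tendsto (fun w : ℂ => w ^ 2 *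
          ((w ^ (2 * n) - w ^ n * (2 * (n : ℂ) ^ 3 + 2 * (n : ℂ))
            - (n : ℂ) ^ 2 * ((n : ℂ) ^ 2 - 1)) / (2 * w ^ 2 * (w ^ n - (n : ℂ)) ^ 2)))
        (nhdsWithin 0 {0}ᶜ) (nhds ((1 - (n : ℂ) ^ 2) / 2)) ∧
      (1 - (n : ℂ) ^ 2) / 2 ≠ 0) ∧
    (n = 1 →
      Filter.Tendsto (fun w : ℂ => w *
          ((w ^ (2 * n) - w ^ n * (2 * (n : ℂ) ^ 3 + 2 * (n : ℂ))
            - (n : ℂ) ^ 2 * ((n : ℂ) ^ 2 - 1)) / (2 * w ^ 2 * (w ^ n - (n : ℂ)) ^ 2)))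
        (nhdsWithin 0 {0}ᶜ) (nhds (-2)) ∧ (-2 : ℂ) ≠ 0) := by
  refine ⟨fun w hw hne => main_eq n w hw hne, fun h2 => ⟨lim_two n h2, ?_⟩, fun h1 => ?_⟩
  · intro h
    rw [div_eq_zero_iff] at h
    rcases h with h | h
    · have hc : ((n ^ 2 : ℕ) : ℂ) = ((1 : ℕ) : ℂ) := by push_cast; linear_combination -h
      have : n ^ 2 = 1 := Nat.cast_injective hc
      nlinarith
    · exact two_ne_zero h
  · subst h1
    exact ⟨lim_one, by norm_num⟩
end

section
/- Let n ≥ 1 and f(z) = z^{−n} + log(z). Then ∞ is the unique asymptotic value of f at 0: if (s(t), φ(t)) is a path with s(t) → 0 along which f(s(t)e^{iφ(t)}) converges in ℂ (i.e., to a finite value), a contradiction arises. Precisely, boundedness of the real part s^{−n}cos(nφ) + log(s) forces cos(nφ(t)) → 0, but then |sin(nφ(t))| → 1 and the imaginary part −s^{−n} sin(nφ) + φ is unbounded. -/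
open Filter Real Topology

private lemma polar_decomp (n : ℕ) (s φ : ℝ) :
    ((s : ℂ) ^ (-(n : ℤ)) * Complex.exp (-(n : ℂ) * (φ : ℂ) * Complex.I)
        + (Real.log s : ℂ) + (φ : ℂ) * Complex.I)
    = Complex.ofReal (s ^ (-(n:ℤ)) * Real.cos (n * φ) + Real.log s)
      + Complex.ofReal (-(s ^ (-(n:ℤ)) * Real.sin (n * φ)) + φ) * Complex.I := by
  have h1 : (-(n : ℂ) * (φ : ℂ) * Complex.I) = ((-(n * φ) : ℝ) : ℂ) * Complex.I := by
    push_cast; ring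
  rw [h1, Complex.exp_mul_I]
  push_cast
  rw [Complex.cos_neg, Complex.sin_neg]
  ring

private lemma exists_int_mul_pi_btwn {a b : ℝ} (hab : a + 4 ≤ b) :
    ∃ k : ℤ, a ≤ (k : ℝ) * Real.pi ∧ (k : ℝ) * Real.pi ≤ b := by
  refine ⟨⌈a / Real.pi⌉, ?_, ?_⟩
  · have h := Int.le_ceil (a / Real.pi)
    calc a = (a / Real.pi) * Real.pi := by field_simp
      _ ≤ (⌈a / Real.pi⌉ : ℝ) * Real.pi := mul_le_mul_of_nonneg_right h Real.pi_pos.le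
  · have h1 : (⌈a / Real.pi⌉ : ℝ) < a / Real.pi + 1 := Int.ceil_lt_add_one _
    have h2 : (⌈a / Real.pi⌉ : ℝ) * Real.pi ≤ (a / Real.pi + 1) * Real.pi :=
      mul_le_mul_of_nonneg_right h1.le Real.pi_pos.le
    have h3 : (a / Real.pi + 1) * Real.pi = a + Real.pi := by field_simp
    have := Real.pi_le_four
    linarith

/-- For `n ≥ 1` and `f(z) = z^{-n} + log z`, in polar coordinates
`F(s,φ) = s^{-n} e^{-inφ} + log s + iφ` (on the universal cover of the
punctured disk): `∞` is the *unique* asymptotic value at `0`, i.e. along no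
continuous path `(s(t), φ(t))` with `s(t) → 0` does `F` converge to a finite
value `L ∈ ℂ`. -/
theorem stmt15 (n : ℕ) (hn : 1 ≤ n) :
    let F : ℝ → ℝ → ℂ := fun s φ =>
      (s : ℂ) ^ (-(n : ℤ)) * Complex.exp (-(n : ℂ) * (φ : ℂ) * Complex.I)
        + (Real.log s : ℂ) + (φ : ℂ) * Complex.I
    ∀ (s φ : ℝ → ℝ) (L : ℂ), Continuous s → Continuous φ → (∀ t, 0 < s t) →
      Filter.Tendsto s Filter.atTop (nhds 0) →
      ¬ Filter.Tendsto (fun t => F (s t) (φ t)) Filter.atTop (nhds L) := by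
  intro F s φ L hs hφ hpos hs0 hF
  set g : ℝ → ℝ := fun t => (s t) ^ (-(n : ℤ)) with hgdef
  have hre : ∀ t, (F (s t) (φ t)).re = g t * Real.cos (n * φ t) + Real.log (s t) := by
    intro t
    rw [show F (s t) (φ t) = _ from polar_decomp n (s t) (φ t)]
    simp only [Complex.add_re, Complex.mul_re, Complex.ofReal_re, Complex.ofReal_im,
      Complex.I_re, Complex.I_im, mul_zero, mul_one, zero_mul, sub_zero, add_zero, zero_add]
    rfl
  have him : ∀ t, (F (s t) (φ t)).im = -(g t * Real.sin (n * φ t)) + φ t := by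
    intro t
    rw [show F (s t) (φ t) = _ from polar_decomp n (s t) (φ t)]
    simp only [Complex.add_im, Complex.mul_im, Complex.ofReal_re, Complex.ofReal_im,
      Complex.I_re, Complex.I_im, mul_zero, mul_one, zero_mul, sub_zero, add_zero, zero_add]
    rfl
  have hRe : Tendsto (fun t => g t * Real.cos (n * φ t) + Real.log (s t)) atTop (nhds L.re) :=
    Filter.Tendsto.congr hre ((Complex.continuous_re.tendsto L).comp hF)
  have hIm : Tendsto (fun t => -(g t * Real.sin (n * φ t)) + φ t) atTop (nhds L.im) :=
    Filter.Tendsto.congr him ((Complex.continuous_im.tendsto L).comp hF)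
  have hs0' : Tendsto s atTop (nhdsWithin 0 (Set.Ioi 0)) :=
    tendsto_nhdsWithin_of_tendsto_nhds_of_eventually_within s hs0
      (Eventually.of_forall fun t => hpos t)
  have hpowpos : ∀ t, (0:ℝ) < (s t) ^ n := fun t => pow_pos (hpos t) n
  have hsn0 : Tendsto (fun t => (s t) ^ n) atTop (nhds 0) := by
    have := hs0.pow n
    simpa [zero_pow (Nat.one_le_iff_ne_zero.mp hn)] using this
  have hsn0' : Tendsto (fun t => (s t) ^ n) atTop (nhdsWithin 0 (Set.Ioi 0)) :=
    tendsto_nhdsWithin_of_tendsto_nhds_of_eventually_within _ hsn0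
      (Eventually.of_forall fun t => hpowpos t)
  have hg_eq : ∀ t, g t = ((s t) ^ n)⁻¹ := by
    intro t; simp [hgdef, zpow_neg, zpow_natCast]
  have hgtop : Tendsto g atTop atTop :=
    Filter.Tendsto.congr (fun t => (hg_eq t).symm) hsn0'.inv_tendsto_nhdsGT_zero
  have hlog : Tendsto (fun t => Real.log (s t)) atTop atBot :=
    Real.tendsto_log_nhdsGT_zero.comp hs0'
  have hlogpow : Tendsto (fun t => Real.log (s t) * (s t) ^ n) atTop (nhds 0) := by
    have h0 := (tendsto_log_mul_rpow_nhdsGT_zero (r := (n:ℝ)) (by positivity)).comp hs0'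
    refine h0.congr fun t => ?_
    simp [Function.comp, Real.rpow_natCast]
  -- cos (n φ) → 0
  have hcos0 : Tendsto (fun t => Real.cos (n * φ t)) atTop (nhds 0) := by
    have key : ∀ t, Real.cos (n * φ t) =
        (g t * Real.cos (n * φ t) + Real.log (s t)) * (s t) ^ n
          - Real.log (s t) * (s t) ^ n := by
      intro t
      have h1 : g t * (s t) ^ n = 1 := by
        rw [hg_eq t]; exact inv_mul_cancel₀ (hpowpos t).ne'
      have h2 : (g t * Real.cos (n * φ t) + Real.log (s t)) * (s t) ^ n
          - Real.log (s t) * (s t) ^ n = (g t * (s t) ^ n) * Real.cos (n * φ t) := by ring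
      rw [h2, h1, one_mul]
    have h2 : Tendsto (fun t =>
        (g t * Real.cos (n * φ t) + Real.log (s t)) * (s t) ^ n
          - Real.log (s t) * (s t) ^ n) atTop (nhds (L.re * 0 - 0)) :=
      (hRe.mul hsn0).sub hlogpow
    simp only [mul_zero, sub_zero] at h2
    exact h2.congr fun t => (key t).symm
  -- |sin (n φ)| eventually ≥ 1/2
  have hsin2 : Tendsto (fun t => (Real.sin (n * φ t))^2) atTop (nhds 1) := by
    have heq : ∀ t, (Real.sin (n * φ t))^2 = 1 - (Real.cos (n * φ t))^2 := by
      intro t; nlinarith [Real.sin_sq_add_cos_sq (n * φ t)]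
    rw [show (1:ℝ) = 1 - 0^2 by norm_num]
    exact (tendsto_const_nhds.sub (hcos0.pow 2)).congr fun t => (heq t).symm
  have hsin_ev : ∀ᶠ t in atTop, (1/2 : ℝ) ≤ |Real.sin (n * φ t)| := by
    filter_upwards [hsin2.eventually_const_lt (by norm_num : (1/2:ℝ) < 1)] with t ht
    nlinarith [sq_abs (Real.sin (n * φ t)), abs_nonneg (Real.sin (n * φ t))]
  -- |φ| → ∞
  have hImabs : ∀ᶠ t in atTop, |(-(g t * Real.sin (n * φ t)) + φ t)| ≤ |L.im| + 1 := by
    filter_upwards [hIm.eventually (Metric.ball_mem_nhds L.im one_pos)] with t ht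
    rw [Real.dist_eq] at ht
    have := abs_sub_abs_le_abs_sub (-(g t * Real.sin (n * φ t)) + φ t) L.im
    linarith [le_of_lt ht]
  have hphi_lb : ∀ᶠ t in atTop, g t / 2 - (|L.im| + 1) ≤ |φ t| := by
    filter_upwards [hsin_ev, hImabs, hgtop.eventually_ge_atTop 0] with t h1 h2 h3
    have habs : g t / 2 ≤ |g t * Real.sin (n * φ t)| := by
      rw [abs_mul, abs_of_nonneg h3]; nlinarith
    have h5 : |g t * Real.sin (n * φ t)|
        ≤ |(-(g t * Real.sin (n * φ t)) + φ t)| + |φ t| := by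
      have h6 := abs_add_le (g t * Real.sin (n * φ t) - φ t) (φ t)
      have h7 : g t * Real.sin (n * φ t) - φ t + φ t = g t * Real.sin (n * φ t) := by ring
      rw [h7] at h6
      have h8 : (-(g t * Real.sin (n * φ t)) + φ t) = -(g t * Real.sin (n * φ t) - φ t) := by
        ring
      rw [h8, abs_neg]
      exact h6
    linarith
  have hphitop : Tendsto (fun t => |φ t|) atTop atTop := by
    refine tendsto_atTop_mono' atTop hphi_lb ?_
    have := tendsto_atTop_add_const_right atTop (-(|L.im| + 1)) (hgtop.atTop_div_const two_pos)
    exact this.congr fun t => by ring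
  -- set h := n • φ
  set h : ℝ → ℝ := fun t => (n : ℝ) * φ t with hhdef
  have hhcont : Continuous h := continuous_const.mul hφ
  have hhtop : Tendsto (fun t => |h t|) atTop atTop := by
    refine tendsto_atTop_mono (fun t => ?_) hphitop
    rw [hhdef]
    simp only
    rw [abs_mul, abs_of_nonneg (by positivity : (0:ℝ) ≤ (n:ℝ))]
    nlinarith [abs_nonneg (φ t), (by exact_mod_cast hn : (1:ℝ) ≤ (n:ℝ))]
  -- final contradiction via IVT
  obtain ⟨T, hT⟩ := eventually_atTop.mp hsin_ev
  obtain ⟨T₁, hT₁⟩ := eventually_atTop.mp (hhtop.eventually_ge_atTop (|h T| + 4))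
  set t₁ : ℝ := max T T₁ with ht₁def
  have ht₁T : T ≤ t₁ := le_max_left _ _
  have hjump : 4 ≤ |h t₁ - h T| := by
    have := hT₁ t₁ (le_max_right _ _)
    have h2 := abs_sub_abs_le_abs_sub (h t₁) (h T)
    linarith
  have hmem : ∃ k : ℤ, (k : ℝ) * Real.pi ∈ Set.uIcc (h T) (h t₁) := by
    rcases le_total (h T) (h t₁) with hc | hc
    · rw [abs_of_nonneg (by linarith)] at hjump
      obtain ⟨k, hk1, hk2⟩ := exists_int_mul_pi_btwn (a := h T) (b := h t₁) (by linarith)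
      exact ⟨k, by rw [Set.uIcc_of_le hc]; exact ⟨hk1, hk2⟩⟩
    · rw [abs_of_nonpos (by linarith)] at hjump
      obtain ⟨k, hk1, hk2⟩ := exists_int_mul_pi_btwn (a := h t₁) (b := h T) (by linarith)
      exact ⟨k, by rw [Set.uIcc_of_ge hc]; exact ⟨hk1, hk2⟩⟩
  obtain ⟨k, hk⟩ := hmem
  obtain ⟨t₂, ht₂mem, ht₂⟩ := intermediate_value_uIcc hhcont.continuousOn hk
  have ht₂T : T ≤ t₂ := by
    rw [Set.uIcc_of_le ht₁T] at ht₂mem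
    exact ht₂mem.1
  have hc1 := hT t₂ ht₂T
  have hzero : Real.sin ((n : ℝ) * φ t₂) = 0 := by
    rw [show ((n : ℝ) * φ t₂) = (k : ℝ) * Real.pi from ht₂]
    exact Real.sin_int_mul_pi k
  rw [hzero] at hc1
  norm_num at hc1
end
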